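/- Every countable, locally finite, connected 2n-regular graph admits a Schreier structure: an edge-labeling by n generators, each given as a permutation of the vertex set, such that the edge multiset of the graph equals the union over i of the functional graphs of the permutations σ_1,...,σ_n. -/

import Mathlib

open Set Function

/-- Schröder–Bernstein, remembering that the bijection is pointwise either `f`
or a partial inverse of `g`. -/
theorem csb_adj {α : Type*} {β : Type*} (f : α → β) (g : β → α)
    (hf : Function.Injective f) (hg : Function.Injective g) :
    ∃ h : α ≃ β, ∀ a, h a = f a ∨ g (h a) = a := by
  classical
  cases' isEmpty_or_nonempty β with hβ hβ
  · have : IsEmpty α := Function.isEmpty f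
    exact ⟨(Equiv.equivEmpty α).trans (Equiv.equivEmpty β).symm, fun a => this.elim a⟩
  set F : Set α →o Set α :=
    { toFun := fun s => (g '' (f '' s)ᶜ)ᶜ
      monotone' := fun s t hst =>
        compl_subset_compl.mpr <| image_mono <| compl_subset_compl.mpr <| image_mono hst }
  set s : Set α := F.lfp
  have hs : (g '' (f '' s)ᶜ)ᶜ = s := F.map_lfp
  have hns : g '' (f '' s)ᶜ = sᶜ := compl_injective (by simp [hs])
  set g' := invFun g
  have g'g : LeftInverse g' g := leftInverse_invFun hg
  have hg'ns : g' '' sᶜ = (f '' s)ᶜ := by rw [← hns, g'g.image_image]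
  set h : α → β := s.piecewise f g'
  have hsur : Surjective h := by rw [← range_eq_univ, range_piecewise, hg'ns, union_compl_self]
  have hinj : Injective h := by
    refine (injective_piecewise_iff _).2 ⟨hf.injOn, ?_, ?_⟩
    · intro x hx y hy hxy
      obtain ⟨x', _, rfl⟩ : x ∈ g '' (f '' s)ᶜ := by rwa [hns]
      obtain ⟨y', _, rfl⟩ : y ∈ g '' (f '' s)ᶜ := by rwa [hns]
      rw [g'g _, g'g _] at hxy
      rw [hxy]
    · intro x hx y hy hxy
      obtain ⟨y', hy', rfl⟩ : y ∈ g '' (f '' s)ᶜ := by rwa [hns]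
      rw [g'g _] at hxy
      exact hy' ⟨x, hx, hxy⟩
  refine ⟨Equiv.ofBijective h ⟨hinj, hsur⟩, fun a => ?_⟩
  by_cases ha : a ∈ s
  · left; simp [Equiv.ofBijective, h, Set.piecewise_eq_of_mem _ _ _ ha]
  · right
    have : a ∈ g '' (f '' s)ᶜ := by rwa [hns]
    obtain ⟨b, _, rfl⟩ := this
    simp [Equiv.ofBijective, h, Set.piecewise_eq_of_notMem _ _ _ ha, g']
    exact congrArg g (g'g b)

/-- 1-factorization of an `n`-in-`n`-out bipartite-type incidence structure. -/
theorem factorization1 (V : Type*) : ∀ (n : ℕ) (E : Type*) (tl hd : E → V)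
    (hfin : ∀ v, {e | tl e = v}.Finite)
    (htl : ∀ v : V, Nat.card {e | tl e = v} = n)
    (hhd : ∀ v : V, Nat.card {e | hd e = v} = n),
    ∃ β : (Fin n × V) ≃ E, (∀ p : Fin n × V, tl (β p) = p.2) ∧
      ∀ i : Fin n, Function.Bijective fun x => hd (β (i, x)) := by
  intro n
  induction n with
  | zero =>
    intro E tl hd hfin htl hhd
    have hE : IsEmpty E := by
      refine ⟨fun e => ?_⟩
      have h2 : Finite ↥{e' | tl e' = tl e} := (hfin _).to_subtype
      have h3 : Nonempty ↥{e' | tl e' = tl e} := ⟨⟨e, rfl⟩⟩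
      exact absurd (htl (tl e)) Nat.card_pos.ne'
    exact ⟨Equiv.equivOfIsEmpty _ _, fun p => p.1.elim0, fun i => i.elim0⟩
  | succ n IH =>
    intro E tl hd hfin htl hhd
    classical
    -- head fibers are finite
    have hhfin : ∀ v, {e | hd e = v}.Finite := by
      intro v
      rw [← Set.not_infinite]
      intro hinf
      have : Infinite ↥{e | hd e = v} := Set.infinite_coe_iff.mpr hinf
      have := hhd v
      rw [Nat.card_eq_zero_of_infinite] at this
      omega
    set Ft : V → Finset E := fun v => (hfin v).toFinset with hFt
    set Fh : V → Finset E := fun v => (hhfin v).toFinset with hFh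
    have cardFt : ∀ v, (Ft v).card = n + 1 := fun v => by
      rw [hFt, ← Set.ncard_eq_toFinset_card _ (hfin v), ← Nat.card_coe_set_eq, htl v]
    have cardFh : ∀ v, (Fh v).card = n + 1 := fun v => by
      rw [hFh, ← Set.ncard_eq_toFinset_card _ (hhfin v), ← Nat.card_coe_set_eq, hhd v]
    have memFt : ∀ v e, e ∈ Ft v ↔ tl e = v := fun v e => by
      rw [hFt, Set.Finite.mem_toFinset]; rfl
    have memFh : ∀ v e, e ∈ Fh v ↔ hd e = v := fun v e => by
      rw [hFh, Set.Finite.mem_toFinset]; rfl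
    -- generic Hall condition
    have cond : ∀ (F G : V → Finset E) (_ : ∀ v, (F v).card = n + 1)
        (_ : ∀ v, (G v).card = n + 1) (pr : E → V)
        (_ : ∀ v e, e ∈ F v ↔ pr e = v) (qr : E → V)
        (_ : ∀ v e, e ∈ G v ↔ qr e = v),
        ∀ S : Finset V, S.card ≤ (S.biUnion fun a => (F a).image qr).card := by
      intro F G cF cG pr mF qr mG S
      set H := S.biUnion fun a => (F a).image qr with hH
      have hdisj : ∀ a ∈ S, ∀ b ∈ S, a ≠ b → Disjoint (F a) (F b) := by
        intro a _ b _ hab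
        rw [Finset.disjoint_left]
        intro e hea heb
        exact hab (((mF a e).1 hea).symm.trans ((mF b e).1 heb))
      have h1 : (S.biUnion F).card = (n + 1) * S.card := by
        rw [Finset.card_biUnion hdisj, Finset.sum_congr rfl fun a _ => cF a,
          Finset.sum_const, smul_eq_mul, mul_comm]
      have h2 : (S.biUnion F).card = ∑ h ∈ H, ((S.biUnion F).filter fun e => qr e = h).card := by
        refine Finset.card_eq_sum_card_fiberwise ?_
        intro e he
        obtain ⟨a, ha, hea⟩ := Finset.mem_biUnion.1 he
        exact Finset.mem_biUnion.2 ⟨a, ha, Finset.mem_image_of_mem qr hea⟩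
      have h3 : ∀ h ∈ H, ((S.biUnion F).filter fun e => qr e = h).card ≤ n + 1 := by
        intro h _
        rw [← cG h]
        refine Finset.card_le_card fun e he => ?_
        rw [mG]
        exact (Finset.mem_filter.1 he).2
      have h4 : (n + 1) * S.card ≤ (n + 1) * H.card := by
        calc (n + 1) * S.card = (S.biUnion F).card := h1.symm
          _ = ∑ h ∈ H, ((S.biUnion F).filter fun e => qr e = h).card := h2
          _ ≤ ∑ _h ∈ H, (n + 1) := Finset.sum_le_sum h3
          _ = (n + 1) * H.card := by rw [Finset.sum_const, smul_eq_mul, mul_comm]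
      exact Nat.le_of_mul_le_mul_left h4 (Nat.succ_pos n)
    obtain ⟨f, hfinj, hfmem⟩ := (Finset.all_card_le_biUnion_card_iff_exists_injective
      (fun a => (Ft a).image hd)).1 (cond Ft Fh cardFt cardFh tl memFt hd memFh)
    obtain ⟨g, hginj, hgmem⟩ := (Finset.all_card_le_biUnion_card_iff_exists_injective
      (fun b => (Fh b).image tl)).1 (cond Fh Ft cardFh cardFt hd memFh tl memFt)
    obtain ⟨τ, hτ⟩ := csb_adj f g hfinj hginj
    have hr : ∀ a, ∃ e, tl e = a ∧ hd e = τ a := by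
      intro a
      rcases hτ a with h | h
      · obtain ⟨e, he, hee⟩ := Finset.mem_image.1 (hfmem a)
        exact ⟨e, (memFt a e).1 he, by rw [hee, h]⟩
      · obtain ⟨e, he, hee⟩ := Finset.mem_image.1 (hgmem (τ a))
        exact ⟨e, by rw [hee, h], (memFh (τ a) e).1 he⟩
    choose m hm1 hm2 using hr
    have minj : Function.Injective m := by
      intro a b hab
      rw [← hm1 a, ← hm1 b, hab]
    set C : Set E := (Set.range m)ᶜ with hC
    -- fibers in the complement
    have keytl : ∀ v, {e | tl e = v} ∩ Set.range m = {m v} := by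
      intro v
      ext e
      simp only [Set.mem_inter_iff, Set.mem_setOf_eq, Set.mem_range, Set.mem_singleton_iff]
      constructor
      · rintro ⟨hv, a, rfl⟩
        rw [hm1 a] at hv
        rw [hv]
      · rintro rfl
        exact ⟨hm1 v, v, rfl⟩
    have keyhd : ∀ v, {e | hd e = v} ∩ Set.range m = {m (τ.symm v)} := by
      intro v
      ext e
      simp only [Set.mem_inter_iff, Set.mem_setOf_eq, Set.mem_range, Set.mem_singleton_iff]
      constructor
      · rintro ⟨hv, a, rfl⟩
        rw [hm2 a] at hv
        rw [← hv]
        simp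
      · rintro rfl
        refine ⟨?_, _, rfl⟩
        rw [hm2]
        simp
    -- generic: card of fiber within C
    have cardsub : ∀ (pr : E → V) (hprfin : ∀ v, {e | pr e = v}.Finite)
        (hprc : ∀ v, Nat.card {e | pr e = v} = n + 1) (w : V → E)
        (_ : ∀ v, {e | pr e = v} ∩ Set.range m = {w v}),
        ∀ v, Nat.card {e : ↥C | pr ↑e = v} = n ∧ {e : ↥C | pr ↑e = v}.Finite := by
      intro pr hprfin hprc w hw v
      have e1 : {e : ↥C | pr ↑e = v} ≃ ↥({e | pr e = v} \ Set.range m) :=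
        ⟨fun x => ⟨↑↑x, x.2, (Set.mem_compl_iff _ _).1 x.1.2⟩,
         fun y => ⟨⟨↑y, (Set.mem_compl_iff _ _).2 y.2.2⟩, y.2.1⟩,
         fun _ => rfl, fun _ => rfl⟩
      have hwv : w v ∈ {e | pr e = v} ∩ Set.range m := (hw v) ▸ rfl
      have e2 : {e | pr e = v} \ Set.range m = {e | pr e = v} \ {w v} := by
        ext e
        simp only [Set.mem_diff, Set.mem_setOf_eq, Set.mem_singleton_iff]
        constructor
        · rintro ⟨h1, h2⟩
          exact ⟨h1, fun h => h2 (h ▸ hwv.2)⟩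
        · rintro ⟨h1, h2⟩
          refine ⟨h1, fun h => h2 ?_⟩
          have he : e ∈ {e | pr e = v} ∩ Set.range m := ⟨h1, h⟩
          rw [hw v] at he
          exact he
      constructor
      · rw [Nat.card_congr e1, e2, Nat.card_coe_set_eq,
          Set.ncard_diff_singleton_of_mem hwv.1, ← Nat.card_coe_set_eq, hprc v]
        omega
      · rw [← Set.finite_coe_iff]
        have : ({e | pr e = v} \ Set.range m).Finite := (hprfin v).diff
        have : Finite ↥({e | pr e = v} \ Set.range m) := this.to_subtype
        exact Finite.of_equiv _ e1.symm
    obtain ⟨βp, hβ1, hβ2⟩ := IH ↥C (fun e => tl ↑e) (fun e => hd ↑e)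
      (fun v => (cardsub tl hfin htl m keytl v).2)
      (fun v => (cardsub tl hfin htl m keytl v).1)
      (fun v => (cardsub hd hhfin hhd (fun v => m (τ.symm v)) keyhd v).1)
    -- assemble the equivalence
    let e3 : Fin 1 × V ≃ V :=
      ⟨fun p => p.2, fun v => (0, v), fun p => Prod.ext (Subsingleton.elim _ _) rfl, fun _ => rfl⟩
    let β : Fin (n + 1) × V ≃ E :=
      (Equiv.prodCongr finSumFinEquiv.symm (Equiv.refl V)).trans
        ((Equiv.sumProdDistrib (Fin n) (Fin 1) V).trans
          ((Equiv.sumCongr βp (e3.trans (Equiv.ofInjective m minj))).trans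
            ((Equiv.sumComm _ _).trans (Equiv.Set.sumCompl (Set.range m)))))
    have hβcast : ∀ (j : Fin n) (x : V), β (Fin.castSucc j, x) = ↑(βp (j, x)) := by
      intro j x
      show ((Equiv.sumComm _ _).trans (Equiv.Set.sumCompl (Set.range m)))
        ((Equiv.sumCongr βp (e3.trans (Equiv.ofInjective m minj)))
          ((Equiv.sumProdDistrib (Fin n) (Fin 1) V)
            (finSumFinEquiv.symm (Fin.castSucc j), x))) = ↑(βp (j, x))
      rw [show (Fin.castSucc j) = Fin.castAdd 1 j from rfl, finSumFinEquiv_symm_apply_castAdd]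
      simp
    have hβlast : ∀ x : V, β (Fin.last n, x) = m x := by
      intro x
      show ((Equiv.sumComm _ _).trans (Equiv.Set.sumCompl (Set.range m)))
        ((Equiv.sumCongr βp (e3.trans (Equiv.ofInjective m minj)))
          ((Equiv.sumProdDistrib (Fin n) (Fin 1) V)
            (finSumFinEquiv.symm (Fin.last n), x))) = m x
      rw [show (Fin.last n) = Fin.natAdd n 0 from Fin.ext (by simp), finSumFinEquiv_symm_apply_natAdd]
      simp [e3, Equiv.ofInjective]
    refine ⟨β, ?_, ?_⟩
    · rintro ⟨i, x⟩
      induction i using Fin.lastCases with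
      | last => rw [hβlast x]; exact hm1 x
      | cast j => rw [hβcast j x]; exact hβ1 (j, x)
    · intro i
      induction i using Fin.lastCases with
      | last =>
        have : (fun x => hd (β (Fin.last n, x))) = τ := by
          funext x
          rw [hβlast x]
          exact hm2 x
        rw [this]
        exact τ.bijective
      | cast j =>
        have : (fun x => hd (β (Fin.castSucc j, x))) = fun x => hd ↑(βp (j, x)) := by
          funext x
          rw [hβcast j x]
        rw [this]
        exact hβ2 j

/-- Summing the cardinalities of the fibers over a finite set of base points
is at most the cardinality of the whole set. -/
lemma sum_fiber_card_le {α β : Type*} [DecidableEq α] [DecidableEq β]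
    (N : Finset α) (X : Finset β) (pr : α → β) :
    ∑ x ∈ X, (N.filter fun e => pr e = x).card ≤ N.card := by
  classical
  set M := N.filter fun e => pr e ∈ X with hM
  have h1 : M.card = ∑ x ∈ X, (M.filter fun e => pr e = x).card :=
    Finset.card_eq_sum_card_fiberwise fun e he => (Finset.mem_filter.1 he).2
  have h2 : ∀ x ∈ X, (M.filter fun e => pr e = x) = (N.filter fun e => pr e = x) := by
    intro x hx
    ext e
    simp only [hM, Finset.mem_filter]
    constructor
    · rintro ⟨⟨h, _⟩, h3⟩; exact ⟨h, h3⟩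
    · rintro ⟨h, h3⟩; exact ⟨⟨h, h3 ▸ hx⟩, h3⟩
  calc ∑ x ∈ X, (N.filter fun e => pr e = x).card
      = ∑ x ∈ X, (M.filter fun e => pr e = x).card :=
        Finset.sum_congr rfl fun x hx => by rw [h2 x hx]
    _ = M.card := h1.symm
    _ ≤ N.card := Finset.card_le_card (Finset.filter_subset _ _)

/-- every countable, locally finite, connected `2n`-regular multigraph
admits a Schreier structure: there are `n` permutations `σ 1, …, σ n` of the vertex
set such that the edge multiset of the graph is exactly the union of the functional
graphs of the `σ i` (witnessed by the bijection `β`, which orients the edge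
`β (i, x)` from `x` to `σ i x`).  Here the degree of `v` is the (finite) number of
edge-ends at `v`, loops counting twice. -/
theorem countable_regular_admits_schreier_structure {V E : Type*}
    [Countable V] [Countable E] (n : ℕ) (ends : E → V × V)
    -- local finiteness: only finitely many edge-ends at each vertex
    (hlocfin₁ : ∀ v : V, {e : E | (ends e).1 = v}.Finite)
    (hlocfin₂ : ∀ v : V, {e : E | (ends e).2 = v}.Finite)
    -- 2n-regularity: each vertex has degree 2n (a loop contributes 2)
    (hreg : ∀ v : V,
      Nat.card {e : E | (ends e).1 = v} + Nat.card {e : E | (ends e).2 = v} = 2 * n)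
    -- connectedness
    (hconn : ∀ x y : V, Relation.ReflTransGen
      (fun a b => ∃ e : E, ends e = (a, b) ∨ ends e = (b, a)) x y) :
    ∃ (σ : Fin n → Equiv.Perm V) (β : Fin n × V ≃ E),
      ∀ (i : Fin n) (x : V),
        ends (β (i, x)) = (x, σ i x) ∨ ends (β (i, x)) = (σ i x, x) := by
  classical
  have c1 : ∀ v, (hlocfin₁ v).toFinset.card = Nat.card {e : E | (ends e).1 = v} := fun v => by
    rw [← Set.ncard_eq_toFinset_card _ (hlocfin₁ v), ← Nat.card_coe_set_eq]
  have c2 : ∀ v, (hlocfin₂ v).toFinset.card = Nat.card {e : E | (ends e).2 = v} := fun v => by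
    rw [← Set.ncard_eq_toFinset_card _ (hlocfin₂ v), ← Nat.card_coe_set_eq]
  -- STEP 1 : Eulerian orientation, via Hall's theorem in both directions plus
  -- an adjacency-preserving Schröder–Bernstein argument.
  set t : Fin n × V → Finset E :=
    fun p => (hlocfin₁ p.2).toFinset ∪ (hlocfin₂ p.2).toFinset with ht
  have memt : ∀ p e, e ∈ t p ↔ (ends e).1 = p.2 ∨ (ends e).2 = p.2 := by
    intro p e
    simp only [ht, Finset.mem_union, Set.Finite.mem_toFinset, Set.mem_setOf_eq]
  have cond1 : ∀ s : Finset (Fin n × V), s.card ≤ (s.biUnion t).card := by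
    intro s
    set X := s.image Prod.snd with hX
    set N := s.biUnion t with hN
    have hXN : ∀ x ∈ X, ∀ e : E, ((ends e).1 = x ∨ (ends e).2 = x) → e ∈ N := by
      intro x hx e he
      obtain ⟨p, hp, rfl⟩ := Finset.mem_image.1 hx
      exact Finset.mem_biUnion.2 ⟨p, hp, (memt p e).2 he⟩
    have hfib1 : ∀ x ∈ X, Nat.card {e : E | (ends e).1 = x}
        = (N.filter fun e => (ends e).1 = x).card := by
      intro x hx
      rw [← c1 x]
      congr 1
      ext e
      simp only [Finset.mem_filter, Set.Finite.mem_toFinset, Set.mem_setOf_eq]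
      exact ⟨fun h => ⟨hXN x hx e (Or.inl h), h⟩, fun h => h.2⟩
    have hfib2 : ∀ x ∈ X, Nat.card {e : E | (ends e).2 = x}
        = (N.filter fun e => (ends e).2 = x).card := by
      intro x hx
      rw [← c2 x]
      congr 1
      ext e
      simp only [Finset.mem_filter, Set.Finite.mem_toFinset, Set.mem_setOf_eq]
      exact ⟨fun h => ⟨hXN x hx e (Or.inr h), h⟩, fun h => h.2⟩
    have hcount : X.card * (2 * n) ≤ 2 * N.card := by
      calc X.card * (2 * n) = ∑ _x ∈ X, 2 * n := by rw [Finset.sum_const, smul_eq_mul]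
        _ = ∑ x ∈ X, (Nat.card {e : E | (ends e).1 = x}
              + Nat.card {e : E | (ends e).2 = x}) :=
            (Finset.sum_congr rfl fun x _ => (hreg x).symm)
        _ = (∑ x ∈ X, (N.filter fun e => (ends e).1 = x).card)
              + ∑ x ∈ X, (N.filter fun e => (ends e).2 = x).card := by
            rw [← Finset.sum_add_distrib]
            exact Finset.sum_congr rfl fun x hx => by rw [hfib1 x hx, hfib2 x hx]
        _ ≤ N.card + N.card := by
            have := sum_fiber_card_le N X fun e => (ends e).1
            have := sum_fiber_card_le N X fun e => (ends e).2
            omega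
        _ = 2 * N.card := by ring
    have hsX : s.card ≤ n * X.card := by
      calc s.card ≤ ((Finset.univ : Finset (Fin n)) ×ˢ X).card := by
            refine Finset.card_le_card fun p hp => ?_
            exact Finset.mem_product.2 ⟨Finset.mem_univ _, Finset.mem_image_of_mem _ hp⟩
        _ = n * X.card := by rw [Finset.card_product, Finset.card_univ, Fintype.card_fin]
    have : 2 * (n * X.card) ≤ 2 * N.card := by
      calc 2 * (n * X.card) = X.card * (2 * n) := by ring
        _ ≤ 2 * N.card := hcount
    exact le_trans hsX (Nat.le_of_mul_le_mul_left this zero_lt_two)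
  set t' : E → Finset (Fin n × V) :=
    fun e => (Finset.univ : Finset (Fin n)) ×ˢ ({(ends e).1, (ends e).2} : Finset V) with ht'
  have cond2 : ∀ s : Finset E, s.card ≤ (s.biUnion t').card := by
    intro s
    set Y := s.biUnion (fun e => ({(ends e).1, (ends e).2} : Finset V)) with hY
    have hbi : s.biUnion t' = (Finset.univ : Finset (Fin n)) ×ˢ Y := by
      ext p
      simp only [ht', hY, Finset.mem_biUnion, Finset.mem_product, Finset.mem_univ, true_and]
    have hmem1 : ∀ e ∈ s, (ends e).1 ∈ Y := fun e he =>
      Finset.mem_biUnion.2 ⟨e, he, Finset.mem_insert_self _ _⟩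
    have hmem2 : ∀ e ∈ s, (ends e).2 ∈ Y := fun e he =>
      Finset.mem_biUnion.2 ⟨e, he, Finset.mem_insert_of_mem (Finset.mem_singleton_self _)⟩
    have hb : ∀ y, (s.filter fun e => (ends e).1 = y).card
        + (s.filter fun e => (ends e).2 = y).card ≤ 2 * n := by
      intro y
      have b1 : (s.filter fun e => (ends e).1 = y).card ≤ Nat.card {e : E | (ends e).1 = y} := by
        rw [← c1 y]
        exact Finset.card_le_card fun e he => (Set.Finite.mem_toFinset _).2
          (Finset.mem_filter.1 he).2
      have b2 : (s.filter fun e => (ends e).2 = y).card ≤ Nat.card {e : E | (ends e).2 = y} := by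
        rw [← c2 y]
        exact Finset.card_le_card fun e he => (Set.Finite.mem_toFinset _).2
          (Finset.mem_filter.1 he).2
      have := hreg y
      omega
    have h2s : 2 * s.card ≤ Y.card * (2 * n) := by
      calc 2 * s.card
          = (∑ y ∈ Y, (s.filter fun e => (ends e).1 = y).card)
            + ∑ y ∈ Y, (s.filter fun e => (ends e).2 = y).card := by
            rw [← Finset.card_eq_sum_card_fiberwise hmem1,
              ← Finset.card_eq_sum_card_fiberwise hmem2]
            ring
        _ = ∑ y ∈ Y, ((s.filter fun e => (ends e).1 = y).card
              + (s.filter fun e => (ends e).2 = y).card) := by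
            rw [← Finset.sum_add_distrib]
        _ ≤ ∑ _y ∈ Y, 2 * n := Finset.sum_le_sum fun y _ => hb y
        _ = Y.card * (2 * n) := by rw [Finset.sum_const, smul_eq_mul]
    have hcard : (s.biUnion t').card = n * Y.card := by
      rw [hbi, Finset.card_product, Finset.card_univ, Fintype.card_fin]
    rw [hcard]
    have : 2 * s.card ≤ 2 * (n * Y.card) := by
      calc 2 * s.card ≤ Y.card * (2 * n) := h2s
        _ = 2 * (n * Y.card) := by ring
    exact Nat.le_of_mul_le_mul_left this zero_lt_two
  obtain ⟨f, hfinj, hfmem⟩ := (Finset.all_card_le_biUnion_card_iff_exists_injective t).1 cond1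
  obtain ⟨g, hginj, hgmem⟩ := (Finset.all_card_le_biUnion_card_iff_exists_injective t').1 cond2
  obtain ⟨h, hh⟩ := csb_adj f g hfinj hginj
  have incid : ∀ p : Fin n × V, (ends (h p)).1 = p.2 ∨ (ends (h p)).2 = p.2 := by
    intro p
    rcases hh p with h1 | h1
    · rw [h1]; exact (memt p (f p)).1 (hfmem p)
    · have := hgmem (h p)
      rw [h1] at this
      have := (Finset.mem_product.1 this).2
      rcases Finset.mem_insert.1 this with h2 | h2
      · exact Or.inl h2.symm
      · exact Or.inr (Finset.mem_singleton.1 h2).symm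
  set tl : E → V := fun e => (h.symm e).2 with htl
  have incid' : ∀ e, (ends e).1 = tl e ∨ (ends e).2 = tl e := by
    intro e
    have := incid (h.symm e)
    rwa [Equiv.apply_symm_apply] at this
  set hd : E → V := fun e => if (ends e).1 = tl e then (ends e).2 else (ends e).1 with hhd
  have key : ∀ e, ends e = (tl e, hd e) ∨ ends e = (hd e, tl e) := by
    intro e
    by_cases hc : (ends e).1 = tl e
    · left
      rw [hhd]
      simp only [if_pos hc]
      exact Prod.ext hc rfl
    · right
      have h2 : (ends e).2 = tl e := (incid' e).resolve_left hc
      rw [hhd]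
      simp only [if_neg hc]
      exact Prod.ext rfl h2
  -- tail fibers
  have etv : ∀ v, {e | tl e = v} ≃ Fin n := by
    intro v
    refine ⟨fun x => (h.symm ↑x).1, fun j => ⟨h (j, v), by simp [htl]⟩, ?_, ?_⟩
    · rintro ⟨e, he⟩
      refine Subtype.ext ?_
      have he' : (h.symm e).2 = v := he
      show h ((h.symm e).1, v) = e
      rw [← he']
      simp
    · intro j
      simp
  have htlfin : ∀ v, {e | tl e = v}.Finite := by
    intro v
    rw [← Set.finite_coe_iff]
    exact Finite.of_equiv _ (etv v).symm
  have htlcard : ∀ v, Nat.card {e | tl e = v} = n := by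
    intro v
    rw [Nat.card_congr (etv v)]
    simp
  -- head fibers
  have hhdcard : ∀ v, Nat.card {e | hd e = v} = n := by
    intro v
    set U : Finset E := (hlocfin₁ v).toFinset ∪ (hlocfin₂ v).toFinset with hU
    have hmemU : ∀ e, e ∈ U ↔ (ends e).1 = v ∨ (ends e).2 = v := by
      intro e
      simp only [hU, Finset.mem_union, Set.Finite.mem_toFinset, Set.mem_setOf_eq]
    have hor : ∀ e, (tl e = v ∨ hd e = v) ↔ ((ends e).1 = v ∨ (ends e).2 = v) := by
      intro e
      rcases key e with k | k <;> rw [k] <;> tauto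
    have hand : ∀ e, (tl e = v ∧ hd e = v) ↔ ((ends e).1 = v ∧ (ends e).2 = v) := by
      intro e
      rcases key e with k | k <;> rw [k] <;> constructor <;> rintro ⟨p, q⟩ <;> exact ⟨q, p⟩
    have hhdfin : {e | hd e = v}.Finite := by
      refine Set.Finite.subset U.finite_toSet fun e he => ?_
      rw [Finset.mem_coe, hmemU]
      exact (hor e).1 (Or.inr he)
    set A1 := U.filter fun e => (ends e).1 = v with hA1
    set A2 := U.filter fun e => (ends e).2 = v with hA2
    set B1 := U.filter fun e => tl e = v with hB1
    set B2 := U.filter fun e => hd e = v with hB2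
    have hAu : A1 ∪ A2 = B1 ∪ B2 := by
      ext e
      simp only [hA1, hA2, hB1, hB2, Finset.mem_union, Finset.mem_filter]
      constructor
      · rintro (⟨hu, hh'⟩ | ⟨hu, hh'⟩) <;>
          [rcases (hor e).2 (Or.inl hh') with h3 | h3; rcases (hor e).2 (Or.inr hh') with h3 | h3]
          <;> [exact Or.inl ⟨hu, h3⟩; exact Or.inr ⟨hu, h3⟩;
               exact Or.inl ⟨hu, h3⟩; exact Or.inr ⟨hu, h3⟩]
      · rintro (⟨hu, hh'⟩ | ⟨hu, hh'⟩) <;>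
          [rcases (hor e).1 (Or.inl hh') with h3 | h3; rcases (hor e).1 (Or.inr hh') with h3 | h3]
          <;> [exact Or.inl ⟨hu, h3⟩; exact Or.inr ⟨hu, h3⟩;
               exact Or.inl ⟨hu, h3⟩; exact Or.inr ⟨hu, h3⟩]
    have hAi : A1 ∩ A2 = B1 ∩ B2 := by
      ext e
      simp only [hA1, hA2, hB1, hB2, Finset.mem_inter, Finset.mem_filter]
      constructor
      · rintro ⟨⟨hu, p⟩, ⟨_, q⟩⟩
        obtain ⟨p', q'⟩ := (hand e).2 ⟨p, q⟩
        exact ⟨⟨hu, p'⟩, ⟨hu, q'⟩⟩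
      · rintro ⟨⟨hu, p⟩, ⟨_, q⟩⟩
        obtain ⟨p', q'⟩ := (hand e).1 ⟨p, q⟩
        exact ⟨⟨hu, p'⟩, ⟨hu, q'⟩⟩
    have hcards : A1.card + A2.card = B1.card + B2.card := by
      rw [← Finset.card_union_add_card_inter A1 A2, ← Finset.card_union_add_card_inter B1 B2,
        hAu, hAi]
    have hA1c : A1.card = Nat.card {e : E | (ends e).1 = v} := by
      rw [← c1 v]
      congr 1
      ext e
      simp only [hA1, Finset.mem_filter, Set.Finite.mem_toFinset, Set.mem_setOf_eq]
      exact ⟨fun h => h.2, fun h => ⟨(hmemU e).2 (Or.inl h), h⟩⟩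
    have hA2c : A2.card = Nat.card {e : E | (ends e).2 = v} := by
      rw [← c2 v]
      congr 1
      ext e
      simp only [hA2, Finset.mem_filter, Set.Finite.mem_toFinset, Set.mem_setOf_eq]
      exact ⟨fun h => h.2, fun h => ⟨(hmemU e).2 (Or.inr h), h⟩⟩
    have hB1c : B1.card = n := by
      have hBe : B1 = (htlfin v).toFinset := by
        ext e
        simp only [hB1, Finset.mem_filter, Set.Finite.mem_toFinset, Set.mem_setOf_eq]
        exact ⟨fun h => h.2, fun h => ⟨(hmemU e).2 ((hor e).1 (Or.inl h)), h⟩⟩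
      rw [hBe, ← Set.ncard_eq_toFinset_card _ (htlfin v), ← Nat.card_coe_set_eq, htlcard v]
    have hB2c : Nat.card {e | hd e = v} = B2.card := by
      have hBe : B2 = hhdfin.toFinset := by
        ext e
        simp only [hB2, Finset.mem_filter, Set.Finite.mem_toFinset, Set.mem_setOf_eq]
        exact ⟨fun h => h.2, fun h => ⟨(hmemU e).2 ((hor e).1 (Or.inr h)), h⟩⟩
      rw [hBe, ← Set.ncard_eq_toFinset_card _ hhdfin, ← Nat.card_coe_set_eq]
    rw [hB2c]
    have := hreg v
    omega
  -- STEP 2 : 1-factorization of the oriented graph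
  obtain ⟨β, hβ1, hβ2⟩ := factorization1 V n E tl hd htlfin htlcard hhdcard
  refine ⟨fun i => Equiv.ofBijective _ (hβ2 i), β, fun i x => ?_⟩
  rcases key (β (i, x)) with k | k
  · left
    rw [k]
    exact Prod.ext (hβ1 (i, x)) rfl
  · right
    rw [k]
    exact Prod.ext rfl (hβ1 (i, x))
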